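/- For a locally compact Hausdorff space X, the map x ↦ {x} is a homeomorphism from X onto the set of maximal elements of the upper space UX equipped with the relative Scott topology. -/

import Mathlib

/-- `x` is way below `y`. -/
def wayBelow {P : Type*} [Preorder P] (x y : P) : Prop :=
  ∀ S : Set P, S.Nonempty → DirectedOn (· ≤ ·) S → ∀ s : P, IsLUB S s → y ≤ s →
    ∃ z ∈ S, x ≤ z

/-- A poset is a dcpo if every nonempty directed subset has a supremum. -/
def IsDcpo (P : Type*) [Preorder P] : Prop :=
  ∀ S : Set P, S.Nonempty → DirectedOn (· ≤ ·) S → ∃ s : P, IsLUB S s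

/-- `B` is a (domain-theoretic) basis for `P`. -/
def IsDomainBasis {P : Type*} [Preorder P] (B : Set P) : Prop :=
  ∀ x : P, ∃ S : Set P, S ⊆ B ∧ S.Nonempty ∧ DirectedOn (· ≤ ·) S ∧
    (∀ a ∈ S, wayBelow a x) ∧ IsLUB S x

/-- A poset is continuous if it has a basis (equivalently, the whole poset is a basis). -/
def IsContinuousPoset (P : Type*) [Preorder P] : Prop :=
  IsDomainBasis (Set.univ : Set P)

/-- The Scott topology on a poset. -/
def scottTop (P : Type*) [Preorder P] : TopologicalSpace P where
  IsOpen U := (∀ x ∈ U, ∀ y, x ≤ y → y ∈ U) ∧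
    ∀ S : Set P, S.Nonempty → DirectedOn (· ≤ ·) S → ∀ s : P, IsLUB S s → s ∈ U →
      (S ∩ U).Nonempty
  isOpen_univ := ⟨fun _ _ _ _ => trivial,
    fun S hS _ _ _ _ => hS.imp fun x hx => ⟨hx, trivial⟩⟩
  isOpen_inter := by
    rintro U V ⟨hUup, hUin⟩ ⟨hVup, hVin⟩
    refine ⟨fun x hx y hxy => ⟨hUup x hx.1 y hxy, hVup x hx.2 y hxy⟩, ?_⟩
    rintro S hS hdir s hs ⟨hsU, hsV⟩
    obtain ⟨a, haS, haU⟩ := hUin S hS hdir s hs hsU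
    obtain ⟨b, hbS, hbV⟩ := hVin S hS hdir s hs hsV
    obtain ⟨c, hcS, hac, hbc⟩ := hdir a haS b hbS
    exact ⟨c, hcS, hUup a haU c hac, hVup b hbV c hbc⟩
  isOpen_sUnion := by
    intro C hC
    refine ⟨fun x hx y hxy => ?_, ?_⟩
    · obtain ⟨t, htC, hxt⟩ := hx
      exact ⟨t, htC, (hC t htC).1 x hxt y hxy⟩
    · rintro S hS hdir s hs ⟨t, htC, hst⟩
      obtain ⟨a, haS, hat⟩ := (hC t htC).2 S hS hdir s hs hst
      exact ⟨a, haS, t, htC, hat⟩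

/-- A continuous poset is bicontinuous if the way-below relation admits the dual
characterization via filtered infima and each `↟x` is filtered with infimum `x`. -/
def IsBicontinuous (P : Type*) [Preorder P] : Prop :=
  IsContinuousPoset P ∧
  (∀ x y : P, wayBelow x y ↔
    ∀ S : Set P, S.Nonempty → DirectedOn (· ≥ ·) S → ∀ i : P, IsGLB S i → i ≤ x →
      ∃ s ∈ S, s ≤ y) ∧
  (∀ x : P, {a | wayBelow x a}.Nonempty ∧ DirectedOn (· ≥ ·) {a | wayBelow x a} ∧
    IsGLB {a | wayBelow x a} x)

/-- The interval topology on a bicontinuous poset, with basic open sets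
`(a,b) = {x | a ≪ x ≪ b}`. -/
def intervalTop (P : Type*) [Preorder P] : TopologicalSpace P :=
  .generateFrom {s | ∃ a b : P, s = {x | wayBelow a x ∧ wayBelow x b}}

/-- A globally hyperbolic poset: bicontinuous, with all closed intervals compact
in the interval topology. -/
def IsGloballyHyperbolic (P : Type*) [PartialOrder P] : Prop :=
  IsBicontinuous P ∧ ∀ a b : P, a ≤ b → @IsCompact P (intervalTop P) (Set.Icc a b)

/-- The upper space of a topological space: nonempty compact subsets under
reverse inclusion. -/
structure UpperSpace (X : Type*) [TopologicalSpace X] where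
  carrier : Set X
  nonempty' : carrier.Nonempty
  compact' : IsCompact carrier

/-- Reverse inclusion order on the upper space. -/
instance (X : Type*) [TopologicalSpace X] : PartialOrder (UpperSpace X) where
  le A B := B.carrier ⊆ A.carrier
  le_refl A := subset_rfl
  le_trans A B C h1 h2 := Set.Subset.trans h2 h1
  le_antisymm A B h1 h2 := by
    cases A; cases B
    simp only [UpperSpace.mk.injEq]
    exact subset_antisymm h2 h1

instance (X : Type*) [TopologicalSpace X] : TopologicalSpace (UpperSpace X) :=
  scottTop (UpperSpace X)

section Aux

variable {X : Type*} [TopologicalSpace X]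

lemma UpperSpace.ext' {A B : UpperSpace X} (h : A.carrier = B.carrier) : A = B := by
  cases A; cases B; simpa using h

lemma UpperSpace.le_iff {A B : UpperSpace X} : A ≤ B ↔ B.carrier ⊆ A.carrier := Iff.rfl

/-- The singleton element of the upper space. -/
def UpperSpace.sing (x : X) : UpperSpace X :=
  ⟨{x}, ⟨x, rfl⟩, isCompact_singleton⟩

lemma UpperSpace.sing_max (x : X) : IsMax (UpperSpace.sing x) := by
  intro L hL
  rw [UpperSpace.le_iff] at hL ⊢
  obtain ⟨z, hz⟩ := L.nonempty'
  have hzx : z = x := hL hz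
  intro y hy
  have hy' : y = x := hy
  subst hy'; subst hzx; exact hz

lemma UpperSpace.max_singleton {K : UpperSpace X} (h : IsMax K) :
    ∃ x, K.carrier = {x} := by
  obtain ⟨x, hx⟩ := K.nonempty'
  refine ⟨x, subset_antisymm ?_ (Set.singleton_subset_iff.mpr hx)⟩
  have hle : K ≤ UpperSpace.sing x := Set.singleton_subset_iff.mpr hx
  exact h hle

lemma UpperSpace.isOpen_iff {U : Set (UpperSpace X)} :
    IsOpen U ↔ ((∀ K ∈ U, ∀ L, K ≤ L → L ∈ U) ∧
      ∀ S : Set (UpperSpace X), S.Nonempty → DirectedOn (· ≤ ·) S →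
        ∀ s : UpperSpace X, IsLUB S s → s ∈ U → (S ∩ U).Nonempty) := Iff.rfl

/-- `{K | K.carrier ⊆ V}` is Scott open for `V` open. -/
lemma UpperSpace.down_open [T2Space X] {V : Set X} (hV : IsOpen V) :
    IsOpen {K : UpperSpace X | K.carrier ⊆ V} := by
  rw [UpperSpace.isOpen_iff]
  constructor
  · intro K hK L hKL y hy
    exact hK (hKL hy)
  · rintro S ⟨K0, hK0⟩ hdir s hs hsV
    by_contra hcon
    rw [Set.not_nonempty_iff_eq_empty] at hcon
    have hnot : ∀ K ∈ S, ¬ K.carrier ⊆ V := fun K hK h =>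
      (Set.eq_empty_iff_forall_notMem.mp hcon K) ⟨hK, h⟩
    set C : Set X := K0.carrier \ V with hC
    have hCclosed : IsClosed C := K0.compact'.isClosed.sdiff hV
    haveI : Nonempty S := ⟨⟨K0, hK0⟩⟩
    set t : S → Set X := fun K => C ∩ K.1.carrier with ht
    have htd : Directed (· ⊇ ·) t := by
      rintro ⟨K1, h1⟩ ⟨K2, h2⟩
      obtain ⟨K3, h3, h13, h23⟩ := hdir K1 h1 K2 h2
      exact ⟨⟨K3, h3⟩, Set.inter_subset_inter_right _ h13,
        Set.inter_subset_inter_right _ h23⟩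
    have htn : ∀ K : S, (t K).Nonempty := by
      rintro ⟨K, hK⟩
      obtain ⟨L, hL, hKL, hK0L⟩ := hdir K hK K0 hK0
      obtain ⟨y, hyL, hyV⟩ := Set.not_subset.mp (hnot L hL)
      exact ⟨y, ⟨hK0L hyL, hyV⟩, hKL hyL⟩
    have htc : ∀ K : S, IsCompact (t K) :=
      fun K => K0.compact'.of_isClosed_subset
        (hCclosed.inter K.1.compact'.isClosed)
        (fun y hy => hy.1.1)
    have htcl : ∀ K : S, IsClosed (t K) :=
      fun K => hCclosed.inter K.1.compact'.isClosed
    obtain ⟨y, hy⟩ :=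
      IsCompact.nonempty_iInter_of_directed_nonempty_isCompact_isClosed t htd htn htc htcl
    -- the intersection of all carriers is an upper bound, hence inside s.carrier ⊆ V
    have hInter : (⋂ K : S, K.1.carrier).Nonempty := by
      refine IsCompact.nonempty_iInter_of_directed_nonempty_isCompact_isClosed
        (fun K : S => K.1.carrier) ?_ (fun K => K.1.nonempty')
        (fun K => K.1.compact') (fun K => K.1.compact'.isClosed)
      rintro ⟨K1, h1⟩ ⟨K2, h2⟩
      obtain ⟨K3, h3, h13, h23⟩ := hdir K1 h1 K2 h2
      exact ⟨⟨K3, h3⟩, h13, h23⟩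
    set T : UpperSpace X := ⟨⋂ K : S, K.1.carrier, hInter,
      K0.compact'.of_isClosed_subset (isClosed_iInter fun K => K.1.compact'.isClosed)
        (Set.iInter_subset (fun K : S => K.1.carrier) ⟨K0, hK0⟩)⟩ with hT
    have hTub : T ∈ upperBounds S := by
      rintro K hK
      rw [UpperSpace.le_iff]
      exact Set.iInter_subset (fun K : S => K.1.carrier) ⟨K, hK⟩
    have hsub : T.carrier ⊆ s.carrier := hs.2 hTub
    have hyC : y ∈ C := (Set.mem_iInter.mp hy ⟨K0, hK0⟩).1
    have hyAll : y ∈ T.carrier :=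
      Set.mem_iInter.mpr fun K => (Set.mem_iInter.mp hy K).2
    exact hyC.2 (hsV (hsub hyAll))

/-- The singleton map is continuous into the Scott topology. -/
lemma UpperSpace.sing_preimage_open [T2Space X] [LocallyCompactSpace X]
    {U : Set (UpperSpace X)} (hU : IsOpen U) :
    IsOpen {x : X | UpperSpace.sing x ∈ U} := by
  obtain ⟨hup, hin⟩ := UpperSpace.isOpen_iff.mp hU
  rw [isOpen_iff_forall_mem_open]
  intro x hx
  set S : Set (UpperSpace X) := {K | K.carrier ∈ nhds x} with hS
  have hSne : S.Nonempty := by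
    obtain ⟨K, hKc, hKn⟩ := exists_compact_mem_nhds x
    exact ⟨⟨K, ⟨x, mem_of_mem_nhds hKn⟩, hKc⟩, hKn⟩
  have hSdir : DirectedOn (· ≤ ·) S := by
    intro K1 h1 K2 h2
    obtain ⟨s', hs'n, hs'sub, hs'c⟩ :=
      local_compact_nhds (Filter.inter_mem h1 h2)
    refine ⟨⟨s', ⟨x, mem_of_mem_nhds hs'n⟩, hs'c⟩, hs'n, ?_, ?_⟩
    · exact fun y hy => (hs'sub hy).1
    · exact fun y hy => (hs'sub hy).2
  have hlub : IsLUB S (UpperSpace.sing x) := by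
    constructor
    · intro K hK
      rw [UpperSpace.le_iff]
      exact Set.singleton_subset_iff.mpr (mem_of_mem_nhds hK)
    · intro T hT
      rw [UpperSpace.le_iff]
      intro y hy
      show y = x
      by_contra hyx
      obtain ⟨u, v, hu, hv, hxu, hyv, huv⟩ := t2_separation (Ne.symm hyx)
      obtain ⟨s', hs'n, hs'sub, hs'c⟩ :=
        local_compact_nhds (hu.mem_nhds hxu)
      have hKS : (⟨s', ⟨x, mem_of_mem_nhds hs'n⟩, hs'c⟩ : UpperSpace X) ∈ S := hs'n
      have := hT hKS
      rw [UpperSpace.le_iff] at this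
      have hys : y ∈ s' := this hy
      exact Set.disjoint_left.mp huv (hs'sub hys) hyv
  obtain ⟨K, hKS, hKU⟩ := hin S hSne hSdir (UpperSpace.sing x) hlub hx
  refine ⟨interior K.carrier, ?_, isOpen_interior,
    mem_interior_iff_mem_nhds.mpr hKS⟩
  intro y hy
  have hle : K ≤ UpperSpace.sing y :=
    Set.singleton_subset_iff.mpr (interior_subset hy)
  exact hup K hKU _ hle

end Aux

/-- For a locally compact Hausdorff space `X`, the map `x ↦ {x}` is a
homeomorphism of `X` onto the maximal elements of the upper space with the
relative Scott topology. -/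
theorem upperSpace_max_homeomorph (X : Type*) [TopologicalSpace X]
    [T2Space X] [LocallyCompactSpace X] :
    ∃ h : X ≃ₜ {K : UpperSpace X // IsMax K}, ∀ x : X, (h x).1.carrier = {x} := by
  classical
  let e : X ≃ {K : UpperSpace X // IsMax K} :=
    { toFun := fun x => ⟨UpperSpace.sing x, UpperSpace.sing_max x⟩
      invFun := fun K => (UpperSpace.max_singleton K.2).choose
      left_inv := fun x => by
        have h := (UpperSpace.max_singleton (UpperSpace.sing_max x)).choose_spec
        have h' : ({x} : Set X) = {(UpperSpace.max_singleton (UpperSpace.sing_max x)).choose} := h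
        exact (Set.singleton_eq_singleton_iff.mp h').symm
      right_inv := fun K => by
        apply Subtype.ext
        apply UpperSpace.ext'
        exact ((UpperSpace.max_singleton K.2).choose_spec).symm }
  have hcont : Continuous e := by
    apply Continuous.subtype_mk
    rw [continuous_def]
    intro U hU
    exact UpperSpace.sing_preimage_open hU
  have hopen : IsOpenMap e := by
    intro V hV
    have heq : e '' V = Subtype.val ⁻¹' {K : UpperSpace X | K.carrier ⊆ V} := by
      ext ⟨K, hK⟩
      simp only [Set.mem_image, Set.mem_preimage, Set.mem_setOf_eq]
      constructor
      · rintro ⟨x, hxV, hx⟩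
        have : UpperSpace.sing x = K := congrArg Subtype.val hx
        rw [← this]
        exact Set.singleton_subset_iff.mpr hxV
      · intro hKV
        obtain ⟨c, hc⟩ := UpperSpace.max_singleton hK
        refine ⟨c, ?_, ?_⟩
        · exact hKV (hc ▸ rfl)
        · apply Subtype.ext
          apply UpperSpace.ext'
          exact hc.symm
    rw [heq]
    exact (UpperSpace.down_open hV).preimage continuous_subtype_val
  exact ⟨Equiv.toHomeomorphOfContinuousOpen e hcont hopen, fun x => rfl⟩
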